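/- For |q|<1, the product x·(−y)·z of the level-7 theta quotients x = q·(q²,q⁵,q⁷,q⁷;q⁷)_∞/(q³,q⁴;q⁷)_∞², y = −q·(q,q⁶,q⁷,q⁷;q⁷)_∞/(q²,q⁵;q⁷)_∞², z = (q³,q⁴,q⁷,q⁷;q⁷)_∞/(q,q⁶;q⁷)_∞² satisfies x·(−y)·z = q²·(q⁷;q⁷)_∞⁷/(q;q)_∞. -/

import Mathlib

open Complex

/-- The q-Pochhammer infinite product `(a; q)_∞ = ∏_{k≥0} (1 - a q^k)`. -/
noncomputable def poch (a q : ℂ) : ℂ := ∏' k : ℕ, (1 - a * q ^ k)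

/-- Level 7 theta quotient `x`. -/
noncomputable def x7 (q : ℂ) : ℂ :=
  q * (poch (q ^ 2) (q ^ 7) * poch (q ^ 5) (q ^ 7) * poch (q ^ 7) (q ^ 7) * poch (q ^ 7) (q ^ 7))
    / (poch (q ^ 3) (q ^ 7) * poch (q ^ 4) (q ^ 7)) ^ 2

/-- Level 7 theta quotient `y`. -/
noncomputable def y7 (q : ℂ) : ℂ :=
  -q * (poch q (q ^ 7) * poch (q ^ 6) (q ^ 7) * poch (q ^ 7) (q ^ 7) * poch (q ^ 7) (q ^ 7))
    / (poch (q ^ 2) (q ^ 7) * poch (q ^ 5) (q ^ 7)) ^ 2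

/-- Level 7 theta quotient `z`. -/
noncomputable def z7 (q : ℂ) : ℂ :=
  (poch (q ^ 3) (q ^ 7) * poch (q ^ 4) (q ^ 7) * poch (q ^ 7) (q ^ 7) * poch (q ^ 7) (q ^ 7))
    / (poch q (q ^ 7) * poch (q ^ 6) (q ^ 7)) ^ 2

namespace Level7Aux

lemma term_norm_lt {a q : ℂ} (ha : ‖a‖ < 1) (hq : ‖q‖ < 1) (k : ℕ) : ‖a * q ^ k‖ < 1 := by
  rw [norm_mul, norm_pow]
  calc ‖a‖ * ‖q‖ ^ k ≤ ‖a‖ * 1 := by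
        refine mul_le_mul_of_nonneg_left ?_ (norm_nonneg a)
        exact pow_le_one₀ (norm_nonneg q) hq.le
    _ = ‖a‖ := mul_one _
    _ < 1 := ha

lemma term_ne_zero {a q : ℂ} (ha : ‖a‖ < 1) (hq : ‖q‖ < 1) (k : ℕ) : 1 - a * q ^ k ≠ 0 := by
  intro h
  have h1 : a * q ^ k = 1 := by linear_combination -h
  have h2 := term_norm_lt ha hq k
  rw [h1] at h2
  simp at h2

lemma summable_log {a q : ℂ} (ha : ‖a‖ < 1) (hq : ‖q‖ < 1) :
    Summable fun k : ℕ => Complex.log (1 - a * q ^ k) := by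
  have ha1 : (0:ℝ) < 1 - ‖a‖ := by linarith
  have hgeom : Summable fun k : ℕ => (‖a‖ * (1 - ‖a‖)⁻¹ / 2 + 1) * ‖a‖ * ‖q‖ ^ k :=
    (summable_geometric_of_lt_one (norm_nonneg q) hq).mul_left _
  refine Summable.of_norm_bounded hgeom fun k => ?_
  have hzn : ‖-(a * q ^ k)‖ < 1 := by rw [norm_neg]; exact term_norm_lt ha hq k
  have h0 : ‖a * q ^ k‖ < 1 := term_norm_lt ha hq k
  have hb := Complex.norm_log_one_add_le hzn
  rw [show (1 : ℂ) + -(a * q ^ k) = 1 - a * q ^ k by ring] at hb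
  rw [norm_neg] at hb
  refine hb.trans ?_
  have hqk1 : ‖q‖ ^ k ≤ 1 := pow_le_one₀ (norm_nonneg q) hq.le
  have hnorm : ‖a * q ^ k‖ = ‖a‖ * ‖q‖ ^ k := by rw [norm_mul, norm_pow]
  have hle : ‖a * q ^ k‖ ≤ ‖a‖ := by
    rw [hnorm]
    calc ‖a‖ * ‖q‖ ^ k ≤ ‖a‖ * 1 := mul_le_mul_of_nonneg_left hqk1 (norm_nonneg a)
      _ = ‖a‖ := mul_one _
  have hinv : (1 - ‖a * q ^ k‖)⁻¹ ≤ (1 - ‖a‖)⁻¹ := by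
    apply inv_anti₀ <;> linarith
  have h2 : ‖a * q ^ k‖ ^ 2 * (1 - ‖a * q ^ k‖)⁻¹ / 2 ≤
      (‖a‖ * (1 - ‖a‖)⁻¹ / 2) * (‖a‖ * ‖q‖ ^ k) := by
    have : ‖a * q ^ k‖ ^ 2 * (1 - ‖a * q ^ k‖)⁻¹ ≤ (‖a‖ * (1 - ‖a‖)⁻¹) * ‖a * q ^ k‖ := by
      have h3 : ‖a * q ^ k‖ ^ 2 ≤ ‖a‖ * ‖a * q ^ k‖ := by
        rw [sq]
        exact mul_le_mul_of_nonneg_right hle (norm_nonneg _)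
      calc ‖a * q ^ k‖ ^ 2 * (1 - ‖a * q ^ k‖)⁻¹
          ≤ (‖a‖ * ‖a * q ^ k‖) * (1 - ‖a‖)⁻¹ := by
            apply mul_le_mul h3 hinv (inv_nonneg.mpr (by linarith)) (by positivity)
        _ = (‖a‖ * (1 - ‖a‖)⁻¹) * ‖a * q ^ k‖ := by ring
    rw [hnorm] at this ⊢
    linarith
  calc ‖a * q ^ k‖ ^ 2 * (1 - ‖a * q ^ k‖)⁻¹ / 2 + ‖a * q ^ k‖
      ≤ (‖a‖ * (1 - ‖a‖)⁻¹ / 2) * (‖a‖ * ‖q‖ ^ k) + ‖a‖ * ‖q‖ ^ k := by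
        rw [hnorm] at h2 ⊢; linarith
    _ = (‖a‖ * (1 - ‖a‖)⁻¹ / 2 + 1) * ‖a‖ * ‖q‖ ^ k := by ring

lemma poch_eq_exp {a q : ℂ} (ha : ‖a‖ < 1) (hq : ‖q‖ < 1) :
    poch a q = Complex.exp (∑' k : ℕ, Complex.log (1 - a * q ^ k)) := by
  have hs := summable_log ha hq
  have hp := hs.hasSum.cexp
  have heq : (Complex.exp ∘ fun k : ℕ => Complex.log (1 - a * q ^ k))
      = fun k : ℕ => 1 - a * q ^ k :=
    funext fun k => Complex.exp_log (term_ne_zero ha hq k)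
  rw [heq] at hp
  exact hp.tprod_eq

lemma poch_ne_zero {a q : ℂ} (ha : ‖a‖ < 1) (hq : ‖q‖ < 1) : poch a q ≠ 0 := by
  rw [poch_eq_exp ha hq]; exact Complex.exp_ne_zero _

/-- The reindexing equivalence. -/
def e7 : ℕ ≃ Fin 7 × ℕ := (Nat.divModEquiv 7).trans (Equiv.prodComm _ _)

lemma norm_pow_lt {q : ℂ} (hq : ‖q‖ < 1) {i : ℕ} (hi : 1 ≤ i) : ‖q ^ i‖ < 1 := by
  rw [norm_pow]
  calc ‖q‖ ^ i ≤ ‖q‖ ^ 1 := pow_le_pow_of_le_one (norm_nonneg q) hq.le hi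
    _ = ‖q‖ := pow_one _
    _ < 1 := hq

/-- The key splitting: `(q;q)_∞ = ∏_{i=0}^{6} (q^{i+1}; q^7)_∞`. -/
lemma poch_split {q : ℂ} (hq : ‖q‖ < 1) :
    poch q q = ∏ i : Fin 7, poch (q ^ ((i : ℕ) + 1)) (q ^ 7) := by
  have hq7 : ‖q ^ 7‖ < 1 := norm_pow_lt hq (by norm_num)
  have hqi : ∀ i : Fin 7, ‖q ^ ((i : ℕ) + 1)‖ < 1 := fun i => norm_pow_lt hq (Nat.le_add_left 1 _)
  -- rewrite everything with exp of log-sums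
  rw [poch_eq_exp hq hq]
  have hrhs : ∀ i : Fin 7, poch (q ^ ((i : ℕ) + 1)) (q ^ 7)
      = Complex.exp (∑' n : ℕ, Complex.log (1 - q ^ ((i : ℕ) + 1) * (q ^ 7) ^ n)) :=
    fun i => poch_eq_exp (hqi i) hq7
  simp only [hrhs, ← Complex.exp_sum]
  congr 1
  -- now a tsum identity
  have hs : Summable fun k : ℕ => Complex.log (1 - q * q ^ k) := summable_log hq hq
  have hkey : ∀ p : Fin 7 × ℕ, Complex.log (1 - q * q ^ (e7.symm p))
      = Complex.log (1 - q ^ ((p.1 : ℕ) + 1) * (q ^ 7) ^ p.2) := by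
    rintro ⟨i, n⟩
    have he : e7.symm (i, n) = n * 7 + (i : ℕ) := rfl
    rw [he]
    congr 2
    rw [← pow_mul, ← pow_add, ← pow_succ']
    ring_nf
  have hsum2 : Summable fun p : Fin 7 × ℕ => Complex.log (1 - q * q ^ (e7.symm p)) :=
    (Equiv.summable_iff e7.symm (f := fun k : ℕ => Complex.log (1 - q * q ^ k))).mpr hs
  calc ∑' k : ℕ, Complex.log (1 - q * q ^ k)
      = ∑' p : Fin 7 × ℕ, Complex.log (1 - q * q ^ (e7.symm p)) :=
        (e7.symm.tsum_eq fun k => Complex.log (1 - q * q ^ k)).symm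
    _ = ∑' (i : Fin 7) (n : ℕ), Complex.log (1 - q * q ^ (e7.symm (i, n))) := hsum2.tsum_prod
    _ = ∑' (i : Fin 7) (n : ℕ), Complex.log (1 - q ^ ((i : ℕ) + 1) * (q ^ 7) ^ n) := by
        simp only [hkey]
    _ = ∑ i : Fin 7, ∑' n : ℕ, Complex.log (1 - q ^ ((i : ℕ) + 1) * (q ^ 7) ^ n) :=
        tsum_fintype _

end Level7Aux

open Level7Aux in
theorem level7_product_seven_core (q : ℂ) (hq : ‖q‖ < 1) :
    x7 q * (-(y7 q)) * z7 q = q ^ 2 * poch (q ^ 7) (q ^ 7) ^ 7 / poch q q := by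
  have hqn : ‖q‖ < 1 := hq
  have hq7 : ‖q ^ 7‖ < 1 := norm_pow_lt hqn (by norm_num)
  have hne : ∀ i : ℕ, 1 ≤ i → poch (q ^ i) (q ^ 7) ≠ 0 :=
    fun i hi => poch_ne_zero (norm_pow_lt hqn hi) hq7
  have h1 := hne 1 le_rfl
  have h2 := hne 2 (by norm_num)
  have h3 := hne 3 (by norm_num)
  have h4 := hne 4 (by norm_num)
  have h5 := hne 5 (by norm_num)
  have h6 := hne 6 (by norm_num)
  have h7 := hne 7 (by norm_num)
  have hsplit : poch q q = poch (q ^ 1) (q ^ 7) * poch (q ^ 2) (q ^ 7) * poch (q ^ 3) (q ^ 7)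
      * poch (q ^ 4) (q ^ 7) * poch (q ^ 5) (q ^ 7) * poch (q ^ 6) (q ^ 7)
      * poch (q ^ 7) (q ^ 7) := by
    rw [poch_split hqn, Fin.prod_univ_seven]
    rfl
  have hq1 : poch (q ^ 1) (q ^ 7) = poch q (q ^ 7) := by rw [pow_one]
  rw [hq1] at hsplit h1
  have hy : -(y7 q) = q * (poch q (q ^ 7) * poch (q ^ 6) (q ^ 7) * poch (q ^ 7) (q ^ 7)
      * poch (q ^ 7) (q ^ 7)) / (poch (q ^ 2) (q ^ 7) * poch (q ^ 5) (q ^ 7)) ^ 2 := by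
    rw [y7]; ring
  have hD : (poch (q ^ 3) (q ^ 7) * poch (q ^ 4) (q ^ 7)) ^ 2
      * (poch (q ^ 2) (q ^ 7) * poch (q ^ 5) (q ^ 7)) ^ 2
      * (poch q (q ^ 7) * poch (q ^ 6) (q ^ 7)) ^ 2 ≠ 0 :=
    mul_ne_zero (mul_ne_zero (pow_ne_zero _ (mul_ne_zero h3 h4))
      (pow_ne_zero _ (mul_ne_zero h2 h5))) (pow_ne_zero _ (mul_ne_zero h1 h6))
  have hE : poch q (q ^ 7) * poch (q ^ 2) (q ^ 7) * poch (q ^ 3) (q ^ 7) * poch (q ^ 4) (q ^ 7)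
      * poch (q ^ 5) (q ^ 7) * poch (q ^ 6) (q ^ 7) * poch (q ^ 7) (q ^ 7) ≠ 0 :=
    mul_ne_zero (mul_ne_zero (mul_ne_zero (mul_ne_zero (mul_ne_zero (mul_ne_zero h1 h2) h3) h4)
      h5) h6) h7
  rw [hy, x7, z7, div_mul_div_comm, div_mul_div_comm, hsplit, div_eq_div_iff hD hE]
  ring
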